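/- Let 1 ≤ p < ∞ and r > 0. Then for every nonnegative measurable function f on (0,∞), ( ∫₀^∞ ( ∫₀^x f(y) dy )^p x^{-r-1} dx )^{1/p} ≤ (p/r) ( ∫₀^∞ (y f(y))^p y^{-r-1} dy )^{1/p}. -/

import Mathlib

open MeasureTheory
open scoped ENNReal

private lemma lint_Ioo {e x : ℝ} (he : -1 < e) (hx : 0 < x) :
    ∫⁻ y in Set.Ioo (0:ℝ) x, ENNReal.ofReal (y ^ e) = ENNReal.ofReal (x ^ (e+1) / (e+1)) := by
  rw [← ofReal_integral_eq_lintegral_ofReal]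
  · congr 1
    have h1 : ∫ y in Set.Ioo (0:ℝ) x, y ^ e = ∫ y in (0:ℝ)..x, y ^ e := by
      rw [intervalIntegral.integral_of_le hx.le, integral_Ioc_eq_integral_Ioo]
    rw [h1, integral_rpow (Or.inl he), Real.zero_rpow (by linarith), sub_zero]
  · exact (intervalIntegrable_iff_integrableOn_Ioo_of_le hx.le).1 (intervalIntegral.intervalIntegrable_rpow' he)
  · filter_upwards [ae_restrict_mem measurableSet_Ioo] with y hy using Real.rpow_nonneg hy.1.le _

private lemma lint_Ioi {e y : ℝ} (he : e < -1) (hy : 0 < y) :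
    ∫⁻ x in Set.Ioi y, ENNReal.ofReal (x ^ e) = ENNReal.ofReal (y ^ (e+1) / (-(e+1))) := by
  rw [← ofReal_integral_eq_lintegral_ofReal (integrableOn_Ioi_rpow_of_lt he hy)]
  · rw [integral_Ioi_rpow_of_lt he hy, div_neg, neg_div]
  · filter_upwards [ae_restrict_mem measurableSet_Ioi] with x hx using
      Real.rpow_nonneg (hy.trans hx).le _

private lemma swap_lemma (A B : ℝ → ℝ≥0∞) (hA : Measurable A) (hB : Measurable B) :
    ∫⁻ x in Set.Ioi (0:ℝ), A x * ∫⁻ y in Set.Ioo (0:ℝ) x, B y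
      = ∫⁻ y in Set.Ioi (0:ℝ), B y * ∫⁻ x in Set.Ioi y, A x := by
  set F : ℝ → ℝ → ℝ≥0∞ := fun x y =>
    Set.indicator (Set.Ioi (0:ℝ)) B y * Set.indicator (Set.Ioi y) A x with hF
  have hFm : Measurable (Function.uncurry F) := by
    have h : Function.uncurry F = fun q : ℝ × ℝ =>
        Set.indicator {q : ℝ × ℝ | 0 < q.2} (fun q => B q.2) q *
          Set.indicator {q : ℝ × ℝ | q.2 < q.1} (fun q => A q.1) q := by
      ext ⟨x, y⟩
      simp only [Function.uncurry, hF, Set.indicator_apply, Set.mem_Ioi, Set.mem_setOf_eq]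
    rw [h]
    exact ((hB.comp measurable_snd).indicator
        (measurableSet_lt measurable_const measurable_snd)).mul
      ((hA.comp measurable_fst).indicator (measurableSet_lt measurable_snd measurable_fst))
  have hL : ∫⁻ x, ∫⁻ y, F x y = ∫⁻ x in Set.Ioi (0:ℝ), A x * ∫⁻ y in Set.Ioo (0:ℝ) x, B y := by
    have h1 : ∀ x : ℝ, ∫⁻ y, F x y
        = (∫⁻ y in Set.Ioo (0:ℝ) x, B y) * A x := by
      intro x
      have h2 : ∀ y : ℝ, F x y = Set.indicator (Set.Ioo (0:ℝ) x) (fun y => B y * A x) y := by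
        intro y
        simp only [hF, Set.indicator_apply, Set.mem_Ioi, Set.mem_Ioo]
        split_ifs <;> simp_all
      simp only [h2]
      rw [lintegral_indicator measurableSet_Ioo, lintegral_mul_const _ hB]
    simp only [h1]
    have h3 : (fun x => (∫⁻ y in Set.Ioo (0:ℝ) x, B y) * A x)
        = Set.indicator (Set.Ioi (0:ℝ)) (fun x => (∫⁻ y in Set.Ioo (0:ℝ) x, B y) * A x) := by
      ext x
      rw [Set.indicator_apply]
      split_ifs with h
      · rfl
      · rw [Set.Ioo_eq_empty (by simpa using h), Measure.restrict_empty,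
          lintegral_zero_measure, zero_mul]
    rw [h3, lintegral_indicator measurableSet_Ioi]
    exact setLIntegral_congr_fun measurableSet_Ioi
      (fun x _ => mul_comm _ _)
  have hR : ∫⁻ y, ∫⁻ x, F x y = ∫⁻ y in Set.Ioi (0:ℝ), B y * ∫⁻ x in Set.Ioi y, A x := by
    have h1 : ∀ y : ℝ, ∫⁻ x, F x y
        = Set.indicator (Set.Ioi (0:ℝ)) (fun y => B y * ∫⁻ x in Set.Ioi y, A x) y := by
      intro y
      rw [lintegral_const_mul _ (hA.indicator measurableSet_Ioi),
        lintegral_indicator measurableSet_Ioi]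
      rw [Set.indicator_apply, Set.indicator_apply]
      split_ifs
      · rfl
      · rw [zero_mul]
    simp only [h1]
    rw [lintegral_indicator measurableSet_Ioi]
  rw [← hL, ← hR, lintegral_lintegral_swap hFm.aemeasurable]

private lemma holder_key {p r : ℝ} (hp : 1 ≤ p) (hr : 0 < r) (g : ℝ → ℝ≥0∞)
    (hg : Measurable g) {x : ℝ} (hx : 0 < x) :
    (∫⁻ y in Set.Ioo (0:ℝ) x, g y) ^ p
      ≤ ENNReal.ofReal ((p/r) ^ (p-1)) * ENNReal.ofReal (x ^ (r*(p-1)/p)) *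
        ∫⁻ y in Set.Ioo (0:ℝ) x, (g y) ^ p * ENNReal.ofReal (y ^ ((1 - r/p)*(p-1))) := by
  have hp0 : (0:ℝ) < p := lt_of_lt_of_le one_pos hp
  rcases eq_or_lt_of_le hp with hp1 | hp1
  · rw [← hp1]
    simp only [sub_self, Real.rpow_zero, ENNReal.ofReal_one, one_mul, mul_zero,
      ENNReal.rpow_one, zero_div, mul_one, mul_zero]
    simp [Real.rpow_zero]
  · -- p > 1
    set q : ℝ := p / (p - 1) with hq_def
    have hpq : p.HolderConjugate q := Real.HolderConjugate.conjExponent hp1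
    have hp1' : p - 1 ≠ 0 := sub_ne_zero.2 (ne_of_gt hp1)
    have hq0 : q ≠ 0 := hpq.symm.ne_zero
    set a : ℝ := 1 - r / p with ha_def
    set u : ℝ → ℝ≥0∞ := fun y => g y * ENNReal.ofReal (y ^ (a/q)) with hu_def
    set v : ℝ → ℝ≥0∞ := fun y => ENNReal.ofReal (y ^ (-(a/q))) with hv_def
    have hm : ∀ c : ℝ, Measurable fun y : ℝ => y ^ c := fun c => by measurability
    have hu : Measurable u := hg.mul (ENNReal.measurable_ofReal.comp (hm _))
    have hv : Measurable v := ENNReal.measurable_ofReal.comp (hm _)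
    have key := ENNReal.lintegral_mul_le_Lp_mul_Lq (volume.restrict (Set.Ioo (0:ℝ) x)) hpq
      hu.aemeasurable hv.aemeasurable
    have h1 : ∫⁻ y in Set.Ioo (0:ℝ) x, g y = ∫⁻ y in Set.Ioo (0:ℝ) x, (u * v) y := by
      refine setLIntegral_congr_fun measurableSet_Ioo ?_
      intro y hy
      simp only [hu_def, hv_def, Pi.mul_apply]
      rw [mul_assoc, ← ENNReal.ofReal_mul (Real.rpow_nonneg hy.1.le _),
        ← Real.rpow_add hy.1, add_neg_cancel, Real.rpow_zero, ENNReal.ofReal_one, mul_one]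
    have h2 : ∫⁻ y in Set.Ioo (0:ℝ) x, v y ^ q = ENNReal.ofReal (x ^ (r/p) * (p/r)) := by
      have e1 : ∫⁻ y in Set.Ioo (0:ℝ) x, v y ^ q
          = ∫⁻ y in Set.Ioo (0:ℝ) x, ENNReal.ofReal (y ^ (-a)) := by
        refine setLIntegral_congr_fun measurableSet_Ioo ?_
        intro y hy
        simp only [hv_def]
        have hyq : ((y:ℝ) ^ (-(a/q))) ^ q = y ^ (-a) := by
          rw [← Real.rpow_mul hy.1.le]
          congr 1
          field_simp
        rw [← hyq]
        exact ENNReal.ofReal_rpow_of_pos (Real.rpow_pos_of_pos hy.1 _)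
      have e2 : -(1:ℝ) < -a := by
        have : 0 < r / p := div_pos hr hp0
        simp only [ha_def]; linarith
      rw [e1, lint_Ioo e2 hx]
      congr 1
      have e3 : -a + 1 = r / p := by simp only [ha_def]; ring
      rw [e3, div_eq_mul_inv, inv_div]
    have h3 : ∫⁻ y in Set.Ioo (0:ℝ) x, u y ^ p
        = ∫⁻ y in Set.Ioo (0:ℝ) x, (g y) ^ p * ENNReal.ofReal (y ^ ((1 - r/p)*(p-1))) := by
      refine setLIntegral_congr_fun measurableSet_Ioo ?_
      intro y hy
      simp only [hu_def]
      have hyp : ((y:ℝ) ^ (a/q)) ^ p = y ^ (a * (p - 1)) := by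
        rw [← Real.rpow_mul hy.1.le]
        congr 1
        rw [hq_def]
        field_simp
        try ring
      rw [ENNReal.mul_rpow_of_nonneg _ _ hp0.le,
        ENNReal.ofReal_rpow_of_pos (Real.rpow_pos_of_pos hy.1 _), hyp, ← ha_def]
    have step : (∫⁻ y in Set.Ioo (0:ℝ) x, g y) ^ p
        ≤ (∫⁻ y in Set.Ioo (0:ℝ) x, u y ^ p)
          * (∫⁻ y in Set.Ioo (0:ℝ) x, v y ^ q) ^ (p - 1) := by
      calc (∫⁻ y in Set.Ioo (0:ℝ) x, g y) ^ p
          ≤ ((∫⁻ y in Set.Ioo (0:ℝ) x, u y ^ p) ^ (1/p)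
            * (∫⁻ y in Set.Ioo (0:ℝ) x, v y ^ q) ^ (1/q)) ^ p := by
            rw [h1]; exact ENNReal.rpow_le_rpow key hp0.le
        _ = _ := by
            rw [ENNReal.mul_rpow_of_nonneg _ _ hp0.le, ← ENNReal.rpow_mul,
              ← ENNReal.rpow_mul, one_div_mul_cancel hp0.ne', ENNReal.rpow_one]
            congr 2
            rw [hq_def]
            field_simp
    rw [h3, h2] at step
    refine le_trans step (le_of_eq ?_)
    have hxp : (0:ℝ) < x ^ (r/p) * (p/r) := mul_pos (Real.rpow_pos_of_pos hx _)
      (div_pos hp0 hr)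
    have e4 : (ENNReal.ofReal (x ^ (r/p) * (p/r))) ^ (p-1)
        = ENNReal.ofReal ((p/r) ^ (p-1)) * ENNReal.ofReal (x ^ (r*(p-1)/p)) := by
      rw [ENNReal.ofReal_rpow_of_pos hxp,
        Real.mul_rpow (Real.rpow_nonneg hx.le _) (div_pos hp0 hr).le,
        ← Real.rpow_mul hx.le,
        show r / p * (p - 1) = r * (p - 1) / p from by ring,
        ENNReal.ofReal_mul (Real.rpow_nonneg hx.le _)]
      exact mul_comm _ _
    rw [e4]
    ring

theorem stmt1 (p r : ℝ) (hp : 1 ≤ p) (hr : 0 < r) (f : ℝ → ℝ)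
    (hf : Measurable f) (hf0 : ∀ x, 0 ≤ f x) :
    (∫⁻ x in Set.Ioi (0:ℝ),
        (∫⁻ y in Set.Ioo (0:ℝ) x, ENNReal.ofReal (f y)) ^ p *
          ENNReal.ofReal (x ^ (-r - 1))) ^ (1/p)
      ≤ ENNReal.ofReal (p / r) *
        (∫⁻ y in Set.Ioi (0:ℝ),
          ENNReal.ofReal (y * f y) ^ p * ENNReal.ofReal (y ^ (-r - 1))) ^ (1/p) := by
  have hp0 : (0:ℝ) < p := lt_of_lt_of_le one_pos hp
  have hpr : (0:ℝ) < p / r := div_pos hp0 hr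
  set g : ℝ → ℝ≥0∞ := fun y => ENNReal.ofReal (f y) with hg_def
  have hg : Measurable g := ENNReal.measurable_ofReal.comp hf
  have hm : ∀ c : ℝ, Measurable fun y : ℝ => y ^ c := fun c => by measurability
  set c : ℝ := (1 - r/p) * (p-1) with hc_def
  set B : ℝ → ℝ≥0∞ := fun y => (g y) ^ p * ENNReal.ofReal (y ^ c) with hB_def
  have hB : Measurable B := by
    apply Measurable.mul ?_ (ENNReal.measurable_ofReal.comp (hm _))
    measurability
  set A : ℝ → ℝ≥0∞ := fun x => ENNReal.ofReal (x ^ (-r/p - 1)) with hA_def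
  have hA : Measurable A := ENNReal.measurable_ofReal.comp (hm _)
  set T : ℝ → ℝ≥0∞ := fun x => ∫⁻ y in Set.Ioo (0:ℝ) x, B y with hT_def
  have step1 : (∫⁻ x in Set.Ioi (0:ℝ),
        (∫⁻ y in Set.Ioo (0:ℝ) x, g y) ^ p * ENNReal.ofReal (x ^ (-r - 1)))
      ≤ ENNReal.ofReal ((p/r) ^ (p-1)) * ∫⁻ x in Set.Ioi (0:ℝ), A x * T x := by
    rw [← lintegral_const_mul' _ _ ENNReal.ofReal_ne_top]
    refine lintegral_mono fun x => ?_
    by_cases hx : 0 < x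
    · have h := holder_key hp hr g hg hx
      have hcomb : ENNReal.ofReal (x ^ (r*(p-1)/p)) * ENNReal.ofReal (x ^ (-r - 1))
          = ENNReal.ofReal (x ^ (-r/p - 1)) := by
        rw [← ENNReal.ofReal_mul (Real.rpow_nonneg hx.le _), ← Real.rpow_add hx]
        congr 1
        field_simp
        ring
      calc (∫⁻ y in Set.Ioo (0:ℝ) x, g y) ^ p * ENNReal.ofReal (x ^ (-r - 1))
          ≤ ENNReal.ofReal ((p/r) ^ (p-1)) * ENNReal.ofReal (x ^ (r*(p-1)/p)) * T x
              * ENNReal.ofReal (x ^ (-r - 1)) := mul_le_mul_left h _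
        _ = ENNReal.ofReal ((p/r) ^ (p-1)) * (A x * T x) := by
            rw [show ENNReal.ofReal ((p/r) ^ (p-1)) * ENNReal.ofReal (x ^ (r*(p-1)/p)) * T x
                * ENNReal.ofReal (x ^ (-r - 1))
                = ENNReal.ofReal ((p/r) ^ (p-1)) * (ENNReal.ofReal (x ^ (r*(p-1)/p))
                  * ENNReal.ofReal (x ^ (-r - 1)) * T x) from by ring, hcomb]
    · rw [Set.Ioo_eq_empty hx, Measure.restrict_empty, lintegral_zero_measure,
        ENNReal.zero_rpow_of_pos hp0, zero_mul]
      exact zero_le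
  have step2 : ∫⁻ x in Set.Ioi (0:ℝ), A x * T x
      = ∫⁻ y in Set.Ioi (0:ℝ), B y * ∫⁻ x in Set.Ioi y, A x := swap_lemma A B hA hB
  have step3 : ∫⁻ y in Set.Ioi (0:ℝ), B y * ∫⁻ x in Set.Ioi y, A x
      = ENNReal.ofReal (p/r)
        * ∫⁻ y in Set.Ioi (0:ℝ), (g y) ^ p * ENNReal.ofReal (y ^ (p - r - 1)) := by
    rw [← lintegral_const_mul' _ _ ENNReal.ofReal_ne_top]
    refine setLIntegral_congr_fun measurableSet_Ioi (fun y hy => ?_)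
    have hy0 : (0:ℝ) < y := hy
    have hAint : ∫⁻ x in Set.Ioi y, A x = ENNReal.ofReal (y ^ (-r/p) * (p/r)) := by
      have he : (-r/p - 1 : ℝ) < -1 := by
        have h1 := div_pos hr hp0
        have h2 : -r/p = -(r/p) := neg_div p r
        linarith
      rw [hA_def, lint_Ioi he hy0, show (-r/p - 1 + 1 : ℝ) = -r/p from by ring,
        show (-(-r/p) : ℝ) = r/p from by ring, div_eq_mul_inv, inv_div]
    have hcomb : ENNReal.ofReal (y ^ c) * ENNReal.ofReal (y ^ (-(r/p)))
        = ENNReal.ofReal (y ^ (p - r - 1)) := by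
      rw [← ENNReal.ofReal_mul (Real.rpow_nonneg hy0.le _), ← Real.rpow_add hy0]
      have hce : c + -(r/p) = p - r - 1 := by
        rw [hc_def]
        field_simp
        ring
      rw [hce]
    rw [hAint, hB_def, ENNReal.ofReal_mul (Real.rpow_nonneg hy0.le _),
      show (-r/p : ℝ) = -(r/p) from by ring]
    calc g y ^ p * ENNReal.ofReal (y ^ c)
          * (ENNReal.ofReal (y ^ (-(r/p))) * ENNReal.ofReal (p/r))
        = ENNReal.ofReal (p/r)
          * (g y ^ p * (ENNReal.ofReal (y ^ c) * ENNReal.ofReal (y ^ (-(r/p))))) := by ring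
      _ = _ := by rw [hcomb]
  have step4 : ∫⁻ y in Set.Ioi (0:ℝ), (g y) ^ p * ENNReal.ofReal (y ^ (p - r - 1))
      = ∫⁻ y in Set.Ioi (0:ℝ),
          ENNReal.ofReal (y * f y) ^ p * ENNReal.ofReal (y ^ (-r - 1)) := by
    refine setLIntegral_congr_fun measurableSet_Ioi (fun y hy => ?_)
    have hy0 : (0:ℝ) < y := hy
    have hcomb : ENNReal.ofReal (y ^ p) * ENNReal.ofReal (y ^ (-r - 1))
        = ENNReal.ofReal (y ^ (p - r - 1)) := by
      rw [← ENNReal.ofReal_mul (Real.rpow_nonneg hy0.le _), ← Real.rpow_add hy0]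
      congr 1
      ring
    rw [ENNReal.ofReal_mul hy0.le, ENNReal.mul_rpow_of_nonneg _ _ hp0.le,
      ENNReal.ofReal_rpow_of_pos hy0]
    simp only [hg_def]
    rw [← hcomb]
    ring
  have hconst : ENNReal.ofReal ((p/r) ^ (p-1)) * ENNReal.ofReal (p/r)
      = ENNReal.ofReal (p/r) ^ p := by
    rw [ENNReal.ofReal_rpow_of_pos hpr,
      ← ENNReal.ofReal_mul (Real.rpow_nonneg hpr.le _)]
    congr 1
    nth_rewrite 2 [← Real.rpow_one (p/r)]
    rw [← Real.rpow_add hpr]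
    norm_num
  have main : (∫⁻ x in Set.Ioi (0:ℝ),
        (∫⁻ y in Set.Ioo (0:ℝ) x, g y) ^ p * ENNReal.ofReal (x ^ (-r - 1)))
      ≤ ENNReal.ofReal (p/r) ^ p
        * ∫⁻ y in Set.Ioi (0:ℝ),
            ENNReal.ofReal (y * f y) ^ p * ENNReal.ofReal (y ^ (-r - 1)) := by
    refine le_trans step1 ?_
    rw [step2, step3, step4, ← mul_assoc, hconst]
  have final := ENNReal.rpow_le_rpow main (by positivity : (0:ℝ) ≤ 1/p)
  rw [ENNReal.mul_rpow_of_nonneg _ _ (by positivity : (0:ℝ) ≤ 1/p), ← ENNReal.rpow_mul,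
    mul_one_div_cancel hp0.ne', ENNReal.rpow_one] at final
  exact final
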